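/- Distance recursion bound (error-free case): with d_k = v_* - T_{π_k}^m v_{k-1}, b_k = v_k - T_{π_{k+1}} v_k, in the conservative scheme with mixture rates α_k, one has d_{k+1} ≤ ((1-α_{k+1}) I + α_{k+1} γ P_{π_*}) d_k + ∑_{j=1}^{m-1} (γ P_{π_{k+1}})^j b_k + (1-α_{k+1}) (γ P_{π_k})^m b_{k-1}, componentwise. -/

import Mathlib

open Finset

/-- A (stochastic) policy: for each state, a probability distribution over actions. -/
def IsPolicy {S A : Type*} [Fintype A] (π : S → A → ℝ) : Prop :=
  (∀ s a, 0 ≤ π s a) ∧ ∀ s, ∑ a, π s a = 1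

/-- A Markov transition kernel: for each state-action pair, a distribution over next states. -/
def IsKernel {S A : Type*} [Fintype S] (P : S → A → S → ℝ) : Prop :=
  (∀ s a s', 0 ≤ P s a s') ∧ ∀ s a, ∑ s', P s a s' = 1

/-- One-step state-action evaluation: q(s,a) = r(s,a) + γ E_{s'}[v(s')]. -/
noncomputable def qOf {S A : Type*} [Fintype S] (r : S → A → ℝ) (P : S → A → S → ℝ)
    (γ : ℝ) (v : S → ℝ) (s : S) (a : A) : ℝ :=
  r s a + γ * ∑ s', P s a s' * v s'

/-- Bellman evaluation operator T_π. -/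
noncomputable def Tpol {S A : Type*} [Fintype S] [DecidableEq S] [Fintype A] (r : S → A → ℝ)
    (P : S → A → S → ℝ) (γ : ℝ) (π : S → A → ℝ) (v : S → ℝ) (s : S) : ℝ :=
  ∑ a, π s a * qOf r P γ v s a

/-- Bellman optimality operator T_*. -/
noncomputable def Tstar {S A : Type*} [Fintype S] [DecidableEq S] [Fintype A] [Nonempty A]
    (r : S → A → ℝ) (P : S → A → S → ℝ) (γ : ℝ) (v : S → ℝ) (s : S) : ℝ :=
  Finset.univ.sup' Finset.univ_nonempty (fun a => qOf r P γ v s a)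

/-- Transition matrix P_π of a policy. -/
noncomputable def Ppol {S A : Type*} [Fintype A] (P : S → A → S → ℝ)
    (π : S → A → ℝ) : Matrix S S ℝ :=
  fun s s' => ∑ a, π s a * P s a s'

/-- Expected reward r_π of a policy. -/
noncomputable def rpol {S A : Type*} [Fintype A] (r : S → A → ℝ)
    (π : S → A → ℝ) (s : S) : ℝ :=
  ∑ a, π s a * r s a

section aux
variable {S A : Type*} [Fintype S] [DecidableEq S] [Fintype A]
variable (r : S → A → ℝ) (P : S → A → S → ℝ) (γ : ℝ)

lemma Tpol_eq (π : S → A → ℝ) (v : S → ℝ) (s : S) :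
    Tpol r P γ π v s = rpol r π s + γ * (Ppol P π).mulVec v s := by
  simp only [Tpol, qOf, rpol, Matrix.mulVec, dotProduct, Ppol, mul_add,
    Finset.sum_add_distrib]
  congr 1
  simp only [Finset.mul_sum, Finset.sum_mul]
  rw [Finset.sum_comm]
  exact Finset.sum_congr rfl fun a _ => Finset.sum_congr rfl fun s' _ => by ring

lemma Tpol_sub (π : S → A → ℝ) (v w : S → ℝ) :
    Tpol r P γ π v - Tpol r P γ π w = (γ • Ppol P π).mulVec (v - w) := by
  funext s
  rw [Matrix.smul_mulVec, Matrix.mulVec_sub]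
  simp only [Pi.sub_apply, Pi.smul_apply, smul_eq_mul]
  rw [Tpol_eq, Tpol_eq]
  ring

lemma iter_diff (π : S → A → ℝ) (v : S → ℝ) (n : ℕ) :
    (Tpol r P γ π)^[n] v - (Tpol r P γ π)^[n+1] v
      = ((γ • Ppol P π) ^ n).mulVec (v - Tpol r P γ π v) := by
  induction n with
  | zero => simp [Matrix.one_mulVec]
  | succ n ih =>
    rw [Function.iterate_succ_apply' (Tpol r P γ π) n,
      Function.iterate_succ_apply' (Tpol r P γ π) (n+1), Tpol_sub, ih,
      Matrix.mulVec_mulVec, ← pow_succ']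

lemma telescope (π : S → A → ℝ) (v : S → ℝ) (n : ℕ) (hn : 1 ≤ n) :
    Tpol r P γ π v - (Tpol r P γ π)^[n] v
      = ∑ j ∈ Finset.Ico 1 n, ((γ • Ppol P π) ^ j).mulVec (v - Tpol r P γ π v) := by
  induction n with
  | zero => omega
  | succ n ih =>
    rcases Nat.eq_or_lt_of_le hn with h | h
    · simp [← h]
    · have hn' : 1 ≤ n := by omega
      rw [Finset.sum_Ico_succ_top hn', ← ih hn', ← iter_diff]
      abel

lemma Tpol_le_Tstar [Nonempty A] (π : S → A → ℝ) (hπ : IsPolicy π) (v : S → ℝ) (s : S) :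
    Tpol r P γ π v s ≤ Tstar r P γ v s := by
  unfold Tpol Tstar
  calc ∑ a, π s a * qOf r P γ v s a
      ≤ ∑ a, π s a * Finset.univ.sup' Finset.univ_nonempty (fun a => qOf r P γ v s a) := by
        apply Finset.sum_le_sum
        intro a _
        exact mul_le_mul_of_nonneg_left (Finset.le_sup' _ (Finset.mem_univ a)) (hπ.1 s a)
    _ = _ := by rw [← Finset.sum_mul, hπ.2 s, one_mul]

end aux

theorem distance_recursion_bound {S A : Type*} [Fintype S] [DecidableEq S] [Fintype A] [Nonempty A]
    (r : S → A → ℝ) (P : S → A → S → ℝ) (hP : IsKernel P)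
    (γ : ℝ) (hγ : γ ∈ Set.Ioo (0:ℝ) 1)
    (πstar : S → A → ℝ) (hπstar : IsPolicy πstar)
    (vstar : S → ℝ) (hstarfix : Tpol r P γ πstar vstar = vstar)
    (hopt : ∀ s, Tstar r P γ vstar s = vstar s)
    (πk π' πk1 : S → A → ℝ) (hπk : IsPolicy πk) (hπ' : IsPolicy π')
    (m : ℕ) (hm : 1 ≤ m) (α : ℝ) (hα : α ∈ Set.Icc (0:ℝ) 1)
    (vprev vk vk1 : S → ℝ)
    (hvk : vk = (Tpol r P γ πk)^[m] vprev)
    (hvk1 : vk1 = (Tpol r P γ πk1)^[m] vk)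
    (hgreedy : ∀ s, Tpol r P γ π' vk s = Tstar r P γ vk s)
    (hmix : πk1 = fun s a => (1 - α) * πk s a + α * π' s a) :
    ∀ s, (vstar - vk1) s ≤
      ((1 - α) • (vstar - vk) + α • (γ • Ppol P πstar).mulVec (vstar - vk)
        + ∑ j ∈ Finset.Ico 1 m, ((γ • Ppol P πk1) ^ j).mulVec (vk - Tpol r P γ πk1 vk)
        + (1 - α) • ((γ • Ppol P πk) ^ m).mulVec (vprev - Tpol r P γ πk vprev)) s := by
  intro s
  have hα0 : 0 ≤ α := hα.1
  have h1 : vstar s - vk1 s = (vstar s - Tpol r P γ πk1 vk s)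
      + ∑ j ∈ Finset.Ico 1 m, ((γ • Ppol P πk1) ^ j).mulVec (vk - Tpol r P γ πk1 vk) s := by
    have ht := congrFun (telescope r P γ πk1 vk m hm) s
    simp only [Pi.sub_apply, Finset.sum_apply] at ht
    rw [hvk1]
    linarith [ht]
  have h2 : Tpol r P γ πk1 vk s
      = (1 - α) * Tpol r P γ πk vk s + α * Tpol r P γ π' vk s := by
    simp only [hmix, Tpol, add_mul]
    rw [Finset.sum_add_distrib, Finset.mul_sum, Finset.mul_sum]
    congr 1 <;> exact Finset.sum_congr rfl fun a _ => by ring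
  have h3 : vstar s - Tpol r P γ πk vk s = (vstar s - vk s)
      + ((γ • Ppol P πk) ^ m).mulVec (vprev - Tpol r P γ πk vprev) s := by
    have hd := congrFun (iter_diff r P γ πk vprev m) s
    simp only [Pi.sub_apply] at hd
    have hTvk : Tpol r P γ πk vk s = (Tpol r P γ πk)^[m+1] vprev s := by
      rw [hvk]
      exact congrFun (Function.iterate_succ_apply' (Tpol r P γ πk) m vprev).symm s
    have hvks : vk s = (Tpol r P γ πk)^[m] vprev s := congrFun hvk s
    linarith [hd, hTvk, hvks]
  have h5 : vstar s - Tpol r P γ πstar vk s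
      = (γ • Ppol P πstar).mulVec (vstar - vk) s := by
    have hd := congrFun (Tpol_sub r P γ πstar vstar vk) s
    simp only [Pi.sub_apply] at hd
    rw [← congrFun hstarfix s]
    linarith [hd]
  have h4 : α * Tpol r P γ πstar vk s ≤ α * Tpol r P γ π' vk s :=
    mul_le_mul_of_nonneg_left
      (le_of_le_of_eq (Tpol_le_Tstar r P γ πstar hπstar vk s) (hgreedy s).symm) hα0
  simp only [Pi.add_apply, Pi.sub_apply, Pi.smul_apply, smul_eq_mul, Finset.sum_apply]
  have key : (1 - α) * (vstar s - vk s)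
      + α * ((γ • Ppol P πstar).mulVec (vstar - vk) s)
      + (∑ j ∈ Finset.Ico 1 m, ((γ • Ppol P πk1) ^ j).mulVec (vk - Tpol r P γ πk1 vk) s)
      + (1 - α) * (((γ • Ppol P πk) ^ m).mulVec (vprev - Tpol r P γ πk vprev) s)
      - (vstar s - vk1 s)
      = α * Tpol r P γ π' vk s - α * Tpol r P γ πstar vk s := by
    linear_combination (-1) * h1 + h2 - (1 - α) * h3 - α * h5
  linarith [key, h4]
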